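/- Let p ∈ [1,∞] and q ∈ [1,∞] with 1/p + 1/q = 1. If f ∈ L^p(Ω,μ) and K_q(Γ) < ∞, then E‖β‖₂ ≤ √n · m · √(K_q(Γ)) · ‖f‖_{L^p(Ω)}; in particular β has finite expectation. -/

import Mathlib

open MeasureTheory ProbabilityTheory ENNReal Matrix Filter

noncomputable section

/-- The smallest eigenvalue `s₁(A)` of the symmetric positive semidefinite matrix `AᵀA`. -/
def s1 {m n : ℕ} (A : Matrix (Fin m) (Fin n) ℝ) : ℝ :=
  ⨅ i, (show (Aᵀ * A).IsHermitian by
    simpa [Matrix.conjTranspose_eq_transpose_of_trivial] using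
      Matrix.isHermitian_conjTranspose_mul_self A).eigenvalues i

/-- Euclidean norm on `ℝ^n`. -/
def enorm2 {n : ℕ} (v : Fin n → ℝ) : ℝ := Real.sqrt (∑ j, v j ^ 2)

/-- The matrix `Γ(x)` with entries `Γ(x)_{ij} = γ_j(x⁽ⁱ⁾)`. -/
def dmat {Ω : Type*} {n m : ℕ} (γ : Fin n → Ω → ℝ) (x : Fin m → Ω) :
    Matrix (Fin m) (Fin n) ℝ := Matrix.of fun i j => γ j (x i)

/-- The matrix `R(x) = (Γ(x)ᵀΓ(x))⁻¹Γ(x)ᵀ`. -/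
def Rmat {Ω : Type*} {n m : ℕ} (γ : Fin n → Ω → ℝ) (x : Fin m → Ω) :
    Matrix (Fin n) (Fin m) ℝ := ((dmat γ x)ᵀ * dmat γ x)⁻¹ * (dmat γ x)ᵀ

/-- `β(x) = R(x) F(x)` where `F(x)_i = f(x⁽ⁱ⁾)`. -/
def betaFn {Ω : Type*} {n m : ℕ} (γ : Fin n → Ω → ℝ) (f : Ω → ℝ) (x : Fin m → Ω) :
    Fin n → ℝ := Rmat γ x *ᵥ fun i => f (x i)

/-- The residue `ρ(a)(ω) = f(ω) - ∑ j a_j γ_j(ω)`. -/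
def resid {Ω : Type*} {n : ℕ} (γ : Fin n → Ω → ℝ) (f : Ω → ℝ) (a : Fin n → ℝ) : Ω → ℝ :=
  fun ω => f ω - ∑ j, a j * γ j ω

/-! ### Auxiliary lemmas -/

lemma rayleigh_lower {n : ℕ} {A : Matrix (Fin n) (Fin n) ℝ} (hA : A.IsHermitian) (v : Fin n → ℝ) :
    (⨅ i, hA.eigenvalues i) * (v ⬝ᵥ v) ≤ v ⬝ᵥ (A *ᵥ v) := by
  classical
  rcases Nat.eq_zero_or_pos n with hn | hn
  · subst hn; simp [dotProduct]
  have : Nonempty (Fin n) := ⟨⟨0, hn⟩⟩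
  set U : Matrix (Fin n) (Fin n) ℝ := (hA.eigenvectorUnitary : Matrix (Fin n) (Fin n) ℝ) with hU
  have hUs : U * star U = 1 := (Matrix.mem_unitaryGroup_iff).mp (hA.eigenvectorUnitary).2
  have hstar : star U = Uᵀ := by
    rw [Matrix.star_eq_conjTranspose, Matrix.conjTranspose_eq_transpose_of_trivial]
  set w : Fin n → ℝ := Uᵀ *ᵥ v with hw
  have hvv : w ⬝ᵥ w = v ⬝ᵥ v := by
    rw [hw, Matrix.dotProduct_mulVec, Matrix.vecMul_transpose,
      Matrix.mulVec_mulVec, ← hstar, hUs, Matrix.one_mulVec]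
  have hspec := hA.spectral_theorem
  have hofReal : (RCLike.ofReal ∘ hA.eigenvalues : Fin n → ℝ) = hA.eigenvalues := by
    funext i; simp
  have hAv : v ⬝ᵥ (A *ᵥ v) = ∑ i, hA.eigenvalues i * (w i * w i) := by
    conv_lhs => rw [hspec, Unitary.conjStarAlgAut_apply, ← hU]
    rw [hofReal, hstar, ← Matrix.mulVec_mulVec, ← Matrix.mulVec_mulVec,
      Matrix.dotProduct_mulVec, ← Matrix.mulVec_transpose]
    simp only [← hw, Matrix.mulVec_diagonal, dotProduct]
    exact Finset.sum_congr rfl fun i _ => by ring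
  rw [hAv, ← hvv]
  have hbdd : BddBelow (Set.range hA.eigenvalues) := (Set.finite_range _).bddBelow
  calc (⨅ i, hA.eigenvalues i) * (w ⬝ᵥ w) = ∑ i, (⨅ j, hA.eigenvalues j) * (w i * w i) := by
        rw [dotProduct, Finset.mul_sum]
    _ ≤ ∑ i, hA.eigenvalues i * (w i * w i) := by
        refine Finset.sum_le_sum fun i _ => ?_
        exact mul_le_mul_of_nonneg_right (ciInf_le hbdd i) (mul_self_nonneg _)

lemma inv_trace_aux {n : ℕ} (A U : Matrix (Fin n) (Fin n) ℝ) (d : Fin n → ℝ)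
    (hd : ∀ i, d i ≠ 0) (hUs : U * star U = 1) (hsU : star U * U = 1)
    (hspec : A = U * Matrix.diagonal d * star U) :
    A⁻¹.trace = ∑ i, (d i)⁻¹ := by
  have hinv : A⁻¹ = U * Matrix.diagonal (fun i => (d i)⁻¹) * star U := by
    apply Matrix.inv_eq_right_inv
    rw [hspec]
    calc U * Matrix.diagonal d * star U *
          (U * Matrix.diagonal (fun i => (d i)⁻¹) * star U)
        = U * (Matrix.diagonal d * ((star U * U) *
            Matrix.diagonal (fun i => (d i)⁻¹))) * star U := by
          simp only [Matrix.mul_assoc]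
      _ = 1 := by
          rw [hsU, Matrix.one_mul, Matrix.diagonal_mul_diagonal]
          have h1 : (fun i => d i * (d i)⁻¹) = fun _ => (1:ℝ) := by
            funext i; exact mul_inv_cancel₀ (hd i)
          rw [h1, Matrix.diagonal_one, Matrix.mul_one, hUs]
  rw [hinv, Matrix.trace_mul_cycle, hsU, Matrix.one_mul, Matrix.trace_diagonal]

lemma trace_inv_eq {n : ℕ} {A : Matrix (Fin n) (Fin n) ℝ} (hA : A.IsHermitian)
    (hdet : IsUnit A.det) : A⁻¹.trace = ∑ i, (hA.eigenvalues i)⁻¹ := by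
  have hUs : (hA.eigenvectorUnitary : Matrix (Fin n) (Fin n) ℝ) *
      star (hA.eigenvectorUnitary : Matrix (Fin n) (Fin n) ℝ) = 1 :=
    (Matrix.mem_unitaryGroup_iff).mp (hA.eigenvectorUnitary).2
  have hsU : star (hA.eigenvectorUnitary : Matrix (Fin n) (Fin n) ℝ) *
      (hA.eigenvectorUnitary : Matrix (Fin n) (Fin n) ℝ) = 1 :=
    (Matrix.mem_unitaryGroup_iff').mp (hA.eigenvectorUnitary).2
  have hdet' : A.det ≠ 0 := hdet.ne_zero
  have hd : A.det = ∏ i, hA.eigenvalues i := by simpa using hA.det_eq_prod_eigenvalues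
  have hlam : ∀ i, hA.eigenvalues i ≠ 0 := by
    intro i hzero
    exact hdet' (by rw [hd]; exact Finset.prod_eq_zero (Finset.mem_univ i) hzero)
  have hspec : A = (hA.eigenvectorUnitary : Matrix (Fin n) (Fin n) ℝ) *
      Matrix.diagonal hA.eigenvalues * star (hA.eigenvectorUnitary : Matrix (Fin n) (Fin n) ℝ) := by
    have h := hA.spectral_theorem
    have hofReal : (RCLike.ofReal ∘ hA.eigenvalues : Fin n → ℝ) = hA.eigenvalues := by
      funext i; simp
    rwa [hofReal] at h
  exact inv_trace_aux A _ _ hlam hUs hsU hspec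

lemma eigenvector_dot {n : ℕ} {A : Matrix (Fin n) (Fin n) ℝ} (hA : A.IsHermitian) (i : Fin n) :
    (⇑(hA.eigenvectorBasis i) ⬝ᵥ (A *ᵥ ⇑(hA.eigenvectorBasis i))) = hA.eigenvalues i := by
  simpa using (hA.eigenvalues_eq i).symm

lemma eigenvector_norm {n : ℕ} {A : Matrix (Fin n) (Fin n) ℝ} (hA : A.IsHermitian) (i : Fin n) :
    (⇑(hA.eigenvectorBasis i) ⬝ᵥ ⇑(hA.eigenvectorBasis i)) = 1 := by
  have h : ‖hA.eigenvectorBasis i‖ = 1 := hA.eigenvectorBasis.orthonormal.1 i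
  rw [EuclideanSpace.norm_eq] at h
  have h2 : ∑ j, ‖hA.eigenvectorBasis i j‖ ^ 2 = 1 := by
    have := congrArg (· ^ 2) h
    simpa [Real.sq_sqrt (Finset.sum_nonneg fun j _ => sq_nonneg _)] using this
  rw [dotProduct]
  calc ∑ j, hA.eigenvectorBasis i j * hA.eigenvectorBasis i j
      = ∑ j, ‖hA.eigenvectorBasis i j‖ ^ 2 := by
        refine Finset.sum_congr rfl fun j _ => ?_
        rw [Real.norm_eq_abs, sq_abs, sq]
    _ = 1 := h2

lemma iInf_eigenvalues_eq {n : ℕ} (hn : 0 < n) {A : Matrix (Fin n) (Fin n) ℝ}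
    (hA : A.IsHermitian) :
    (⨅ i, hA.eigenvalues i) = ⨅ v : {v : Fin n → ℚ // v ≠ 0},
      ((fun j => ((v : Fin n → ℚ) j : ℝ)) ⬝ᵥ (A *ᵥ fun j => ((v : Fin n → ℚ) j : ℝ))) /
        ((fun j => ((v : Fin n → ℚ) j : ℝ)) ⬝ᵥ fun j => ((v : Fin n → ℚ) j : ℝ)) := by
  classical
  haveI : Nonempty (Fin n) := ⟨⟨0, hn⟩⟩
  haveI hne : Nonempty {v : Fin n → ℚ // v ≠ 0} :=
    ⟨⟨fun _ => 1, fun h => one_ne_zero (congrFun h ⟨0, hn⟩)⟩⟩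
  set φ : (Fin n → ℝ) → ℝ := fun w => (w ⬝ᵥ (A *ᵥ w)) / (w ⬝ᵥ w) with hφ
  set c : (Fin n → ℚ) → (Fin n → ℝ) := fun v j => ((v j : ℝ)) with hc
  set s : ℝ := ⨅ i, hA.eigenvalues i with hs
  have hlow : ∀ v : {v : Fin n → ℚ // v ≠ 0}, s ≤ φ (c v) := by
    rintro ⟨v, hv⟩
    have hcv : c v ≠ 0 := by
      intro h
      apply hv
      funext j
      have := congrFun h j
      simpa [hc] using this
    have hpos : 0 < (c v) ⬝ᵥ (c v) := by
      rcases Function.ne_iff.mp hcv with ⟨j, hj⟩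
      have hnn : 0 ≤ (c v) ⬝ᵥ (c v) :=
        Finset.sum_nonneg fun k _ => mul_self_nonneg _
      rcases hnn.lt_or_eq with h | h
      · exact h
      · exfalso
        have : ∀ k ∈ Finset.univ, c v k * c v k = 0 := by
          intro k _
          exact (Finset.sum_eq_zero_iff_of_nonneg
            (fun k _ => mul_self_nonneg (c v k))).mp h.symm k (Finset.mem_univ k)
        exact hj (mul_self_eq_zero.mp (this j (Finset.mem_univ j)))
    rw [hφ, le_div_iff₀ hpos]
    exact rayleigh_lower hA (c v)
  refine le_antisymm (le_ciInf hlow) ?_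
  have hbdd : BddBelow (Set.range fun v : {v : Fin n → ℚ // v ≠ 0} => φ (c v)) :=
    ⟨s, by rintro y ⟨v, rfl⟩; exact hlow v⟩
  refine le_of_forall_pos_le_add fun ε hε => ?_
  obtain ⟨i₀, hi₀⟩ := Finite.exists_min hA.eigenvalues
  have hsi : s = hA.eigenvalues i₀ :=
    le_antisymm (ciInf_le (Set.finite_range _).bddBelow i₀) (le_ciInf hi₀)
  set u : Fin n → ℝ := ⇑(hA.eigenvectorBasis i₀) with hu
  have hudot : u ⬝ᵥ u = 1 := eigenvector_norm hA i₀
  have hphiu : φ u = s := by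
    rw [hφ]
    simp only [hudot, eigenvector_dot hA i₀, div_one, hsi]
    exact eigenvector_dot hA i₀
  have hcont : ContinuousAt φ u := by
    apply ContinuousAt.div
    · exact Continuous.continuousAt (by continuity)
    · exact Continuous.continuousAt (by continuity)
    · rw [hudot]; exact one_ne_zero
  rcases Metric.continuousAt_iff.mp hcont ε hε with ⟨δ, hδ, hball⟩
  have hu0 : ∃ j, u j ≠ 0 := by
    by_contra h
    push_neg at h
    have : u ⬝ᵥ u = 0 := by simp only [dotProduct, h, mul_zero, Finset.sum_const_zero]
    rw [hudot] at this; exact one_ne_zero this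
  obtain ⟨j₀, hj₀⟩ := hu0
  set δ' : ℝ := min δ (|u j₀|) with hδ'
  have hδ'pos : 0 < δ' := lt_min hδ (abs_pos.mpr hj₀)
  have hq : ∀ j, ∃ q : ℚ, |u j - (q : ℝ)| < δ' := fun j => exists_rat_near (u j) hδ'pos
  choose q hqlt using hq
  have hdist : dist (c q) u < δ := by
    rw [dist_pi_lt_iff hδ]
    intro j
    rw [Real.dist_eq, abs_sub_comm]
    exact lt_of_lt_of_le (hqlt j) (min_le_left _ _)
  have hqne : q ≠ 0 := by
    intro h
    have := hqlt j₀
    rw [h] at this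
    simp only [Pi.zero_apply, Rat.cast_zero, sub_zero] at this
    exact absurd (lt_of_lt_of_le this (min_le_right _ _)) (lt_irrefl _)
  have hterm : φ (c q) < s + ε := by
    have := hball hdist
    rw [Real.dist_eq, hphiu] at this
    have h2 := (abs_sub_lt_iff.mp this).1
    linarith
  calc (⨅ v : {v : Fin n → ℚ // v ≠ 0}, φ (c v)) ≤ φ (c q) := ciInf_le hbdd ⟨q, hqne⟩
    _ ≤ s + ε := le_of_lt hterm

lemma measurable_s1 {Ω : Type*} [MeasurableSpace Ω] {n m : ℕ} (hn : 0 < n)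
    (γ : Fin n → Ω → ℝ) (hγ : ∀ j, Measurable (γ j)) :
    Measurable fun x : Fin m → Ω => s1 (dmat γ x) := by
  have hmeas : ∀ i j, Measurable fun x : Fin m → Ω => ((dmat γ x)ᵀ * dmat γ x) i j := by
    intro i j
    simp only [Matrix.mul_apply, Matrix.transpose_apply, dmat, Matrix.of_apply]
    exact Finset.measurable_sum _ fun k _ =>
      ((hγ i).comp (measurable_pi_apply k)).mul ((hγ j).comp (measurable_pi_apply k))
  have hrw : (fun x : Fin m → Ω => s1 (dmat γ x)) = fun x =>
      ⨅ v : {v : Fin n → ℚ // v ≠ 0},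
        ((fun j => ((v : Fin n → ℚ) j : ℝ)) ⬝ᵥ (((dmat γ x)ᵀ * dmat γ x) *ᵥ
            fun j => ((v : Fin n → ℚ) j : ℝ))) /
          ((fun j => ((v : Fin n → ℚ) j : ℝ)) ⬝ᵥ fun j => ((v : Fin n → ℚ) j : ℝ)) := by
    funext x
    exact iInf_eigenvalues_eq hn (show ((dmat γ x)ᵀ * dmat γ x).IsHermitian by
      simpa [Matrix.conjTranspose_eq_transpose_of_trivial] using
        Matrix.isHermitian_conjTranspose_mul_self (dmat γ x))
  rw [hrw]
  refine Measurable.iInf fun v => Measurable.div_const ?_ _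
  simp only [dotProduct, Matrix.mulVec]
  refine Finset.measurable_sum _ fun j _ => Measurable.const_mul ?_ _
  exact Finset.measurable_sum _ fun k _ => ((hmeas j k).mul_const _)

lemma mp_eval {ι : Type*} [Fintype ι] [DecidableEq ι] {α : ι → Type*}
    [∀ i, MeasurableSpace (α i)] (μ : ∀ i, Measure (α i)) [∀ i, IsProbabilityMeasure (μ i)]
    (i : ι) : MeasurePreserving (fun x : ∀ j, α j => x i) (Measure.pi μ) (μ i) := by
  refine ⟨measurable_pi_apply i, ?_⟩
  refine Measure.ext fun s hs => ?_
  rw [Measure.map_apply (measurable_pi_apply i) hs]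
  have hpre : (fun x : ∀ j, α j => x i) ⁻¹' s =
      Set.pi Set.univ (Function.update (fun j => (Set.univ : Set (α j))) i s) :=
    Set.eval_preimage
  rw [hpre, Measure.pi_pi]
  have hupd : ∀ j, μ j (Function.update (fun j' => (Set.univ : Set (α j'))) i s j) =
      Function.update (fun _ => (1 : ℝ≥0∞)) i (μ i s) j := by
    intro j
    rcases eq_or_ne j i with rfl | hj
    · simp
    · simp [Function.update_of_ne hj]
  rw [Finset.prod_congr rfl fun j _ => hupd j, Finset.prod_update_of_mem (Finset.mem_univ i)]
  simp

lemma key_bound {Ω : Type*} {n m : ℕ} (hn : 0 < n) (γ : Fin n → Ω → ℝ) (f : Ω → ℝ)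
    (x : Fin m → Ω) (hdet : IsUnit ((dmat γ x)ᵀ * dmat γ x).det) :
    enorm2 (betaFn γ f x) ≤
      Real.sqrt n * Real.sqrt ((s1 (dmat γ x))⁻¹) * ∑ i, |f (x i)| := by
  classical
  haveI : Nonempty (Fin n) := ⟨⟨0, hn⟩⟩
  set A := dmat γ x with hA
  set G := Aᵀ * A with hGdef
  have hG : G.IsHermitian := by
    simpa [Matrix.conjTranspose_eq_transpose_of_trivial] using
      Matrix.isHermitian_conjTranspose_mul_self A
  set R := Rmat γ x with hR
  set F : Fin m → ℝ := fun i => f (x i) with hF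
  have hpsd : G.PosSemidef := by
    have := Matrix.posSemidef_conjTranspose_mul_self A
    rwa [Matrix.conjTranspose_eq_transpose_of_trivial] at this
  have hnn : ∀ i, 0 ≤ hG.eigenvalues i := fun i => hpsd.eigenvalues_nonneg i
  have hdet' : G.det ≠ 0 := hdet.ne_zero
  have hdprod : G.det = ∏ i, hG.eigenvalues i := by simpa using hG.det_eq_prod_eigenvalues
  have hlam : ∀ i, 0 < hG.eigenvalues i := by
    intro i
    rcases (hnn i).lt_or_eq with h | h
    · exact h
    · exact absurd (by rw [hdprod]; exact Finset.prod_eq_zero (Finset.mem_univ i) h.symm) hdet'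
  have hs1 : s1 A = ⨅ i, hG.eigenvalues i := rfl
  have hbdd : BddBelow (Set.range hG.eigenvalues) := (Set.finite_range _).bddBelow
  have hs1pos : 0 < s1 A := by
    obtain ⟨i₀, hi₀⟩ := Finite.exists_min hG.eigenvalues
    have : s1 A = hG.eigenvalues i₀ :=
      le_antisymm (ciInf_le hbdd i₀) (le_ciInf hi₀)
    rw [this]; exact hlam i₀
  have hCS : enorm2 (R *ᵥ F) ≤ Real.sqrt (∑ j, ∑ i, R j i ^ 2) * enorm2 F := by
    rw [enorm2, enorm2, ← Real.sqrt_mul (Finset.sum_nonneg fun j _ =>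
      Finset.sum_nonneg fun i _ => sq_nonneg _ : (0:ℝ) ≤ ∑ j, ∑ i, R j i ^ 2)]
    apply Real.sqrt_le_sqrt
    rw [Finset.sum_mul]
    refine Finset.sum_le_sum fun j _ => ?_
    exact Finset.sum_mul_sq_le_sq_mul_sq Finset.univ (fun i => R j i) F
  have htr : (∑ j, ∑ i, R j i ^ 2) = G⁻¹.trace := by
    have hRRt : R * Rᵀ = G⁻¹ := by
      have hGT : Gᵀ = G := by
        rw [hGdef, Matrix.transpose_mul, Matrix.transpose_transpose]
      rw [hR, Rmat, ← hA, ← hGdef, Matrix.transpose_mul, Matrix.transpose_transpose,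
        Matrix.transpose_nonsing_inv, hGT]
      calc G⁻¹ * Aᵀ * (A * G⁻¹) = G⁻¹ * (G * G⁻¹) := by
            rw [hGdef]; simp only [Matrix.mul_assoc]
        _ = G⁻¹ := by rw [Matrix.mul_nonsing_inv _ hdet, Matrix.mul_one]
    rw [← hRRt, Matrix.trace]
    refine Finset.sum_congr rfl fun j _ => ?_
    simp only [Matrix.diag_apply, Matrix.mul_apply, Matrix.transpose_apply, sq]
  have htrb : G⁻¹.trace ≤ (n : ℝ) * (s1 A)⁻¹ := by
    rw [trace_inv_eq hG hdet]
    calc ∑ i, (hG.eigenvalues i)⁻¹ ≤ ∑ _i : Fin n, (s1 A)⁻¹ := by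
          refine Finset.sum_le_sum fun i _ => ?_
          exact inv_anti₀ hs1pos (ciInf_le hbdd i)
      _ = (n : ℝ) * (s1 A)⁻¹ := by simp [Finset.sum_const, mul_comm]
  have hFb : enorm2 F ≤ ∑ i, |F i| := by
    rw [enorm2]
    have h1 : ∑ i, F i ^ 2 ≤ (∑ i, |F i|) ^ 2 := by
      calc ∑ i, F i ^ 2 = ∑ i, |F i| ^ 2 := by simp [sq_abs]
        _ ≤ (∑ i, |F i|) ^ 2 :=
          Finset.sum_sq_le_sq_sum_of_nonneg fun i _ => abs_nonneg _
    calc Real.sqrt (∑ i, F i ^ 2) ≤ Real.sqrt ((∑ i, |F i|) ^ 2) := Real.sqrt_le_sqrt h1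
      _ = ∑ i, |F i| := Real.sqrt_sq (Finset.sum_nonneg fun i _ => abs_nonneg _)
  have hstep : Real.sqrt (∑ j, ∑ i, R j i ^ 2) ≤ Real.sqrt n * Real.sqrt ((s1 A)⁻¹) := by
    rw [← Real.sqrt_mul (Nat.cast_nonneg n)]
    apply Real.sqrt_le_sqrt
    rw [htr]; exact htrb
  have hbeta : betaFn γ f x = R *ᵥ F := rfl
  rw [hbeta]
  calc enorm2 (R *ᵥ F) ≤ Real.sqrt (∑ j, ∑ i, R j i ^ 2) * enorm2 F := hCS
    _ ≤ (Real.sqrt n * Real.sqrt ((s1 A)⁻¹)) * ∑ i, |F i| := by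
        apply mul_le_mul hstep hFb (Real.sqrt_nonneg _)
        positivity

lemma s1_nonneg {Ω : Type*} {n m : ℕ} (hn : 0 < n) (γ : Fin n → Ω → ℝ) (x : Fin m → Ω) :
    0 ≤ s1 (dmat γ x) := by
  haveI : Nonempty (Fin n) := ⟨⟨0, hn⟩⟩
  have hpsd : ((dmat γ x)ᵀ * dmat γ x).PosSemidef := by
    have := Matrix.posSemidef_conjTranspose_mul_self (dmat γ x)
    rwa [Matrix.conjTranspose_eq_transpose_of_trivial] at this
  exact le_ciInf fun i => hpsd.eigenvalues_nonneg i

/-- Corollary 1: for `1/p + 1/q = 1`, if `f ∈ L^p(Ω,μ)` and `K_q(Γ) < ∞`,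
then `E‖β‖₂ ≤ √n ⬝ m ⬝ √(K_q(Γ)) ⬝ ‖f‖_{L^p(Ω)}`; in particular `β` has finite expectation. -/
theorem stmt3 {Ω : Type*} [MeasurableSpace Ω] (μ : Measure Ω) [IsProbabilityMeasure μ]
    (n m : ℕ) (hn : 1 ≤ n) (hm : 1 ≤ m)
    (γ : Fin n → Ω → ℝ) (hγ : ∀ j, Measurable (γ j))
    (f : Ω → ℝ) (hfm : Measurable f)
    (hinv : ∀ᵐ x ∂(Measure.pi fun _ : Fin m => μ), IsUnit ((dmat γ x)ᵀ * dmat γ x).det)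
    (p q : ℝ≥0∞) (hp : 1 ≤ p) (hq : 1 ≤ q) (hpq : 1 / p + 1 / q = 1)
    (hf : MemLp f p μ)
    (hK : eLpNorm (fun x : Fin m → Ω => (s1 (dmat γ x))⁻¹) (q / 2)
        (Measure.pi fun _ : Fin m => μ) < ⊤) :
    (∫⁻ x, ENNReal.ofReal (enorm2 (betaFn γ f x)) ∂(Measure.pi fun _ : Fin m => μ)
      ≤ ENNReal.ofReal (Real.sqrt n) * m *
        (eLpNorm (fun x : Fin m → Ω => (s1 (dmat γ x))⁻¹) (q / 2)
          (Measure.pi fun _ : Fin m => μ)) ^ (1 / 2 : ℝ) *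
        eLpNorm f p μ) ∧
    ∫⁻ x, ENNReal.ofReal (enorm2 (betaFn γ f x)) ∂(Measure.pi fun _ : Fin m => μ) < ⊤ := by
  classical
  set ν : Measure (Fin m → Ω) := Measure.pi fun _ : Fin m => μ with hν
  set g : (Fin m → Ω) → ℝ := fun x => (s1 (dmat γ x))⁻¹ with hg
  set C : (Fin m → Ω) → ℝ := fun x => Real.sqrt (g x) with hC
  have hgmeas : Measurable g := (measurable_s1 hn γ hγ).inv
  have hCmeas : Measurable C := Real.continuous_sqrt.measurable.comp hgmeas
  have hgnn : ∀ x, 0 ≤ g x := fun x => inv_nonneg.mpr (s1_nonneg hn γ x)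
  have hCnn : ∀ x, 0 ≤ C x := fun x => Real.sqrt_nonneg _
  set K : ℝ≥0∞ := (eLpNorm g (q / 2) ν) ^ (1 / 2 : ℝ) with hKdef
  -- eLpNorm of C
  have hCq : eLpNorm C q ν = K := by
    have hCrw : C = fun x => ‖g x‖ ^ (1/2 : ℝ) := by
      funext x
      show Real.sqrt (g x) = ‖g x‖ ^ (1/2 : ℝ)
      rw [Real.norm_eq_abs, abs_of_nonneg (hgnn x), Real.sqrt_eq_rpow]
    rw [hCrw, eLpNorm_norm_rpow g (by norm_num : (0:ℝ) < 1/2), hKdef]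
    congr 1
    conv_rhs => rw [div_eq_mul_inv]
    congr 1
    rw [one_div, ENNReal.ofReal_inv_of_pos (by norm_num)]
    norm_num
  -- integral over coordinate i
  have hcoord : ∀ i : Fin m, eLpNorm (fun x : Fin m → Ω => |f (x i)|) p ν = eLpNorm f p μ := by
    intro i
    have h1 : (fun x : Fin m → Ω => |f (x i)|) = fun x => ‖(f ∘ fun x : Fin m → Ω => x i) x‖ := by
      funext x; rw [Real.norm_eq_abs]; rfl
    rw [h1, eLpNorm_norm, eLpNorm_comp_measurePreserving hf.aestronglyMeasurable
      (mp_eval (fun _ : Fin m => μ) i)]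
  have hpqr : (1 : ℝ≥0∞) / 1 = 1 / q + 1 / p := by
    rw [add_comm, hpq]
    norm_num
  have hterm : ∀ i : Fin m,
      ∫⁻ x, ENNReal.ofReal (C x * |f (x i)|) ∂ν ≤ K * eLpNorm f p μ := by
    intro i
    have hfi : Measurable fun x : Fin m → Ω => |f (x i)| :=
      (hfm.comp (measurable_pi_apply i)).abs
    have h1 : ∫⁻ x, ENNReal.ofReal (C x * |f (x i)|) ∂ν =
        eLpNorm (fun x => C x * |f (x i)|) 1 ν := by
      rw [eLpNorm_one_eq_lintegral_enorm]
      refine lintegral_congr fun x => ?_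
      rw [← Real.enorm_eq_ofReal (mul_nonneg (hCnn x) (abs_nonneg _))]
    rw [h1]
    haveI : ENNReal.HolderTriple q p 1 := ⟨by simpa [one_div] using hpqr.symm⟩
    have h2 := eLpNorm_le_eLpNorm_mul_eLpNorm_of_nnnorm (μ := ν) (p := q) (q := p) (r := 1)
      hCmeas.aestronglyMeasurable hfi.aestronglyMeasurable (fun a c => a * c) 1
      (Filter.Eventually.of_forall fun x => le_of_eq (by rw [one_mul, nnnorm_mul]))
    rw [ENNReal.coe_one, one_mul] at h2
    calc eLpNorm (fun x => C x * |f (x i)|) 1 ν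
        ≤ eLpNorm C q ν * eLpNorm (fun x => |f (x i)|) p ν := h2
      _ = K * eLpNorm f p μ := by rw [hCq, hcoord i]
  -- pointwise bound
  have hptwise : ∀ᵐ x ∂ν, ENNReal.ofReal (enorm2 (betaFn γ f x)) ≤
      ENNReal.ofReal (Real.sqrt n) * ∑ i, ENNReal.ofReal (C x * |f (x i)|) := by
    filter_upwards [hinv] with x hx
    have hkey := key_bound hn γ f x hx
    have h1 : enorm2 (betaFn γ f x) ≤ Real.sqrt n * ∑ i, C x * |f (x i)| := by
      calc enorm2 (betaFn γ f x) ≤ Real.sqrt n * Real.sqrt ((s1 (dmat γ x))⁻¹) * ∑ i, |f (x i)| :=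
            hkey
        _ = Real.sqrt n * ∑ i, C x * |f (x i)| := by
            simp only [hC, hg]
            rw [mul_assoc, Finset.mul_sum]
    calc ENNReal.ofReal (enorm2 (betaFn γ f x))
        ≤ ENNReal.ofReal (Real.sqrt n * ∑ i, C x * |f (x i)|) := ENNReal.ofReal_le_ofReal h1
      _ = ENNReal.ofReal (Real.sqrt n) * ∑ i, ENNReal.ofReal (C x * |f (x i)|) := by
          rw [ENNReal.ofReal_mul (Real.sqrt_nonneg _),
            ENNReal.ofReal_sum_of_nonneg fun i _ => mul_nonneg (hCnn x) (abs_nonneg _)]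
  -- assemble
  have hmain : ∫⁻ x, ENNReal.ofReal (enorm2 (betaFn γ f x)) ∂ν ≤
      ENNReal.ofReal (Real.sqrt n) * m * K * eLpNorm f p μ := by
    have hmeas_term : ∀ i : Fin m,
        Measurable fun x : Fin m → Ω => ENNReal.ofReal (C x * |f (x i)|) := by
      intro i
      exact (hCmeas.mul (hfm.comp (measurable_pi_apply i)).abs).ennreal_ofReal
    calc ∫⁻ x, ENNReal.ofReal (enorm2 (betaFn γ f x)) ∂ν
        ≤ ∫⁻ x, ENNReal.ofReal (Real.sqrt n) * ∑ i, ENNReal.ofReal (C x * |f (x i)|) ∂ν :=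
          lintegral_mono_ae hptwise
      _ = ENNReal.ofReal (Real.sqrt n) * ∑ i, ∫⁻ x, ENNReal.ofReal (C x * |f (x i)|) ∂ν := by
          rw [lintegral_const_mul _ (Finset.measurable_sum _ fun i _ => hmeas_term i),
            lintegral_finset_sum _ fun i _ => hmeas_term i]
      _ ≤ ENNReal.ofReal (Real.sqrt n) * ∑ _i : Fin m, K * eLpNorm f p μ := by
          exact mul_le_mul_right (Finset.sum_le_sum fun i _ => hterm i) _
      _ = ENNReal.ofReal (Real.sqrt n) * m * K * eLpNorm f p μ := by
          rw [Finset.sum_const, Finset.card_univ, Fintype.card_fin, nsmul_eq_mul]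
          ring
  refine ⟨hmain, lt_of_le_of_lt hmain ?_⟩
  have h1 : ENNReal.ofReal (Real.sqrt n) < ⊤ := ENNReal.ofReal_lt_top
  have h2 : (m : ℝ≥0∞) < ⊤ := ENNReal.natCast_lt_top m
  have h3 : K < ⊤ := ENNReal.rpow_lt_top_of_nonneg (by norm_num) hK.ne
  have h4 : eLpNorm f p μ < ⊤ := hf.2
  exact ENNReal.mul_lt_top (ENNReal.mul_lt_top (ENNReal.mul_lt_top h1 h2) h3) h4
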